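/- Let m ≥ 1 and let t_0 < t_1 < ⋯ < t_{m+1} be m+2 distinct real numbers, and let ε: {0,...,m+1} → {0,1} be a function that is not constant. Then the m+2 points (t_j, t_j², ..., t_j^m, ε(j)) ∈ ℝ^{m+1} are affinely independent, provided ε is monotone nondecreasing (i.e., there is a threshold index k with ε(j) = 0 for j < k and ε(j) = 1 for j ≥ k) and ε takes both values. -/

import Mathlib

open Finset

/-- `m+2` points `(t_j, t_j², …, t_j^m, ε(j))` on the moment curve lifted by a
nonconstant monotone 0-1 last coordinate are affinely independent. -/
theorem stmt7 (m : ℕ) (hm : 1 ≤ m) (t : Fin (m + 2) → ℝ) (ht : StrictMono t)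
    (k : ℕ) (hk1 : 1 ≤ k) (hk2 : k ≤ m + 1) :
    AffineIndependent ℝ (fun j : Fin (m + 2) => fun l : Fin (m + 1) =>
      if (l : ℕ) < m then t j ^ ((l : ℕ) + 1)
      else if k ≤ (j : ℕ) then (1 : ℝ) else 0) := by
  classical
  set p : Fin (m + 2) → Fin (m + 1) → ℝ := fun j : Fin (m + 2) => fun l : Fin (m + 1) =>
      if (l : ℕ) < m then t j ^ ((l : ℕ) + 1)
      else if k ≤ (j : ℕ) then (1 : ℝ) else 0 with hpdef
  set M : Matrix (Fin (m + 2)) (Fin (m + 2)) ℝ := fun j l =>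
      if (l : ℕ) < m + 1 then t j ^ (l : ℕ) else if k ≤ (j : ℕ) then (1 : ℝ) else 0 with hMdef
  have hMp : ∀ (j : Fin (m + 2)) (i : Fin (m + 1)), M j i.succ = p j i := by
    intro j i
    simp only [hMdef, hpdef, Fin.val_succ]
    by_cases h : (i : ℕ) < m
    · rw [if_pos (by omega), if_pos h]
    · rw [if_neg (by omega), if_neg h]
  -- key: the kernel of M is trivial, via a polynomial/Rolle argument
  have key : ∀ v : Fin (m + 2) → ℝ, M.mulVec v = 0 → v = 0 := by
    intro v hMv
    set d : ℝ := v (Fin.last (m + 1)) with hd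
    set P : Polynomial ℝ :=
      ∑ i : Fin (m + 1), Polynomial.C (v i.castSucc) * Polynomial.X ^ (i : ℕ) with hP
    have hdegP : P.natDegree ≤ m := by
      apply Polynomial.natDegree_sum_le_of_forall_le
      intro i _
      exact le_trans (Polynomial.natDegree_C_mul_le _ _)
        (le_trans (Polynomial.natDegree_X_pow_le _) (by omega))
    have hevalP : ∀ x : ℝ, P.eval x = ∑ i : Fin (m + 1), v i.castSucc * x ^ (i : ℕ) := by
      intro x; simp [hP, Polynomial.eval_finset_sum]
    have heval : ∀ j : Fin (m + 2), P.eval (t j) + (if k ≤ (j : ℕ) then d else 0) = 0 := by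
      intro j
      have h0 := congrFun hMv j
      simp only [Matrix.mulVec, dotProduct, Pi.zero_apply] at h0
      rw [Fin.sum_univ_castSucc] at h0
      have e1 : ∀ i : Fin (m + 1), M j i.castSucc * v i.castSucc
          = v i.castSucc * t j ^ (i : ℕ) := by
        intro i
        simp only [hMdef, Fin.coe_castSucc]
        rw [if_pos i.isLt]; ring
      have e2 : M j (Fin.last (m + 1)) = if k ≤ (j : ℕ) then 1 else 0 := by
        simp only [hMdef, Fin.val_last]
        rw [if_neg (by omega)]
      rw [Finset.sum_congr rfl (fun i _ => e1 i), e2] at h0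
      rw [hevalP]
      by_cases hkj : k ≤ (j : ℕ) <;>
        simp only [hkj, if_true, if_false, one_mul, zero_mul, ← hd] at h0 ⊢ <;> linarith
    have hge : ∀ j : Fin (m + 2), k ≤ (j : ℕ) → P.eval (t j) = -d := by
      intro j hj; have := heval j; rw [if_pos hj] at this; linarith
    have hlt : ∀ j : Fin (m + 2), (j : ℕ) < k → P.eval (t j) = 0 := by
      intro j hj; have := heval j; rw [if_neg (by omega)] at this; linarith
    have rolle : ∀ i : Fin (m + 1), ∃ x, x ∈ Set.Ioo (t i.castSucc) (t i.succ) ∧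
        ((i : ℕ) ≠ k - 1 → P.derivative.eval x = 0) := by
      intro i
      have hab : t i.castSucc < t i.succ := ht Fin.castSucc_lt_succ
      by_cases hi : (i : ℕ) = k - 1
      · obtain ⟨x, hx⟩ := Set.nonempty_Ioo.2 hab
        exact ⟨x, hx, fun h => absurd hi h⟩
      · have hfI : P.eval (t i.castSucc) = P.eval (t i.succ) := by
          rcases lt_or_ge (i : ℕ) (k - 1) with h | h
          · rw [hlt _ (by simp only [Fin.coe_castSucc]; omega),
              hlt _ (by simp only [Fin.val_succ]; omega)]
          · rw [hge _ (by simp only [Fin.coe_castSucc]; omega),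
              hge _ (by simp only [Fin.val_succ]; omega)]
        obtain ⟨c, hc, hc'⟩ := exists_deriv_eq_zero hab P.continuous.continuousOn hfI
        rw [Polynomial.deriv] at hc'
        exact ⟨c, hc, fun _ => hc'⟩
    choose ξ hξ hξ0 using rolle
    have hξmono : StrictMono ξ := by
      intro a b hab2
      calc ξ a < t a.succ := (hξ a).2
        _ ≤ t b.castSucc := ht.monotone (by
            rw [Fin.le_def]
            simp only [Fin.val_succ, Fin.coe_castSucc]
            exact hab2)
        _ < ξ b := (hξ b).1
    have hD : P.derivative = 0 := by
      set s : Finset (Fin (m + 1)) := Finset.univ.filter (fun i => (i : ℕ) ≠ k - 1) with hs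
      have hscard : s.card = m := by
        have hse : s = Finset.univ.erase ⟨k - 1, by omega⟩ := by
          ext i
          simp [hs, Fin.ext_iff]
        rw [hse, Finset.card_erase_of_mem (Finset.mem_univ _), Finset.card_univ]
        simp
      apply Polynomial.eq_zero_of_natDegree_lt_card_of_eval_eq_zero' _ (s.image ξ)
      · intro x hx
        obtain ⟨i, hi, rfl⟩ := Finset.mem_image.mp hx
        exact hξ0 i (by simpa [hs] using hi)
      · rw [Finset.card_image_of_injective _ hξmono.injective, hscard]
        have := Polynomial.natDegree_derivative_le P
        omega
    have hP0 : P.natDegree = 0 := Polynomial.natDegree_eq_zero_of_derivative_eq_zero hD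
    obtain ⟨c, hc⟩ := Polynomial.natDegree_eq_zero.mp hP0
    have h1 : P.eval (t 0) = 0 := hlt 0 (by simpa using (by omega : 0 < k))
    have h2 : P.eval (t ⟨k, by omega⟩) = -d := hge _ (le_refl k)
    have hc0 : c = 0 := by rw [← hc] at h1; simpa using h1
    have hd0 : d = 0 := by rw [← hc] at h2; simp [hc0] at h2; linarith
    have hPzero : P = 0 := by rw [← hc, hc0, map_zero]
    have hcoeff : ∀ i : Fin (m + 1), v i.castSucc = 0 := by
      intro i
      have hcf : P.coeff (i : ℕ) = v i.castSucc := by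
        rw [hP, Polynomial.finset_sum_coeff]
        rw [Finset.sum_eq_single i]
        · simp
        · intro b _ hb
          simp only [Polynomial.coeff_C_mul, Polynomial.coeff_X_pow, Fin.val_eq_val,
            mul_ite, mul_one, mul_zero, ite_eq_right_iff]
          exact fun h => absurd h.symm hb
        · simp
      rw [hPzero] at hcf; simpa using hcf.symm
    funext j
    induction j using Fin.lastCases with
    | last => rw [Pi.zero_apply, ← hd]; exact hd0
    | cast i => rw [Pi.zero_apply]; exact hcoeff i
  have hdet : M.det ≠ 0 := by
    intro h
    obtain ⟨v, hv, hMv⟩ := Matrix.exists_mulVec_eq_zero_iff.mpr h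
    exact hv (key v hMv)
  rw [affineIndependent_iff_of_fintype]
  intro w hw hws j
  by_contra hj
  have hws' : ∑ j, w j • p j = 0 := by
    rw [← Finset.univ.weightedVSub_eq_linear_combination hw]
    exact hws
  have hvm : Matrix.vecMul w M = 0 := by
    funext l
    induction l using Fin.cases with
    | zero =>
      have hM0 : ∀ j : Fin (m + 2), M j 0 = 1 := by
        intro j; simp [hMdef]
      simp only [Matrix.vecMul, dotProduct, Pi.zero_apply, hM0, mul_one]
      exact hw
    | succ i =>
      have hco := congrFun hws' i
      simp only [Finset.sum_apply, Pi.smul_apply, smul_eq_mul, Pi.zero_apply] at hco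
      simp only [Matrix.vecMul, dotProduct, Pi.zero_apply]
      rw [← hco]
      exact Finset.sum_congr rfl (fun j _ => by rw [hMp])
  exact hdet (Matrix.exists_vecMul_eq_zero_iff.mp ⟨w, fun h => hj (by rw [h]; rfl), hvm⟩)
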